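/- Let Ω ⊂ ℝ², u harmonic with trace g, v harmonic, and let w̃ ∈ H¹(Ω) be arbitrary. Then 2⟨g − v|_Γ, n·(curl w̃)|_Γ⟩_Γ − ‖∇w̃‖²_{L²(Ω)} ≤ ‖∇(u−v)‖²_{L²(Ω)}, where n·(curl w̃)|_Γ ∈ H^{−1/2}(Γ) is the normal trace of the divergence-free field curl w̃ = (−∂₂w̃, ∂₁w̃). -/
import Mathlib

open scoped RealInnerProductSpace

/-- Abstract Sobolev setting for `Ω ⊆ ℝ²`: `V = H¹(Ω)`, `L2v = L²(Ω;ℝ²)`, `L2 = L²(Ω)`,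
`Ht = H^{1/2}(Γ)`, `Hm = H^{−1/2}(Γ)`, `Hd = H(div,Ω)`; `grad`, `emb`, `tr`, `toL2v`,
`dvg`, `ntr`, `pair` as usual with the integration-by-parts formula `hIBP`.
`curl : V → Hd` is the 2D vector curl `w ↦ (−∂₂w, ∂₁w)`, which is divergence-free
(`hcdiv`) and satisfies `‖curl w‖_{L²} = ‖∇w‖_{L²}` (`hcnorm`).

Statement: for `u, v` weakly harmonic with `u|_Γ = g` and arbitrary `w̃ ∈ H¹(Ω)`,
`2⟨g − v|_Γ, n·(curl w̃)⟩_Γ − ‖∇w̃‖²_{L²(Ω)} ≤ ‖∇(u−v)‖²_{L²(Ω)}`. -/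
theorem stmt12
    {V L2v L2 Ht Hm Hd : Type*}
    [AddCommGroup V] [Module ℝ V]
    [NormedAddCommGroup L2v] [InnerProductSpace ℝ L2v]
    [NormedAddCommGroup L2] [InnerProductSpace ℝ L2]
    [AddCommGroup Ht] [Module ℝ Ht] [AddCommGroup Hm] [Module ℝ Hm]
    [AddCommGroup Hd] [Module ℝ Hd]
    (grad : V →ₗ[ℝ] L2v) (emb : V →ₗ[ℝ] L2) (tr : V →ₗ[ℝ] Ht)
    (toL2v : Hd →ₗ[ℝ] L2v) (dvg : Hd →ₗ[ℝ] L2) (ntr : Hd →ₗ[ℝ] Hm)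
    (pair : Ht →ₗ[ℝ] Hm →ₗ[ℝ] ℝ)
    (hIBP : ∀ (w : V) (σ : Hd),
      ⟪grad w, toL2v σ⟫ = pair (tr w) (ntr σ) - ⟪emb w, dvg σ⟫)
    (curl : V →ₗ[ℝ] Hd)
    (hcdiv : ∀ w : V, dvg (curl w) = 0)
    (hcnorm : ∀ w : V, ‖toL2v (curl w)‖ = ‖grad w‖)
    (u v : V) (g : Ht) (hg : tr u = g)
    (hu : ∀ φ : V, tr φ = 0 → ⟪grad u, grad φ⟫ = 0)
    (hv : ∀ φ : V, tr φ = 0 → ⟪grad v, grad φ⟫ = 0)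
    (w : V) :
    2 * pair (g - tr v) (ntr (curl w)) - ‖grad w‖ ^ 2 ≤ ‖grad (u - v)‖ ^ 2 := by
  have h1 : pair (g - tr v) (ntr (curl w)) = ⟪grad (u - v), toL2v (curl w)⟫ := by
    have h := hIBP (u - v) (curl w)
    rw [hcdiv, inner_zero_right, map_sub tr, hg] at h
    linarith
  have h2 : (0:ℝ) ≤ ‖grad (u - v) - toL2v (curl w)‖ ^ 2 := sq_nonneg _
  rw [norm_sub_sq_real] at h2
  rw [h1, ← hcnorm w]
  linarith
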